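/- Let m be a closed DBM of dimension 2n, let a,b ∈ {0,…,2n−1}, let d ∈ ℚ, and let m' = IncClose(m,a,b,d). Then m' is consistent if and only if all three of the following hold: m[b,a] + d ≥ 0, m[ā,b̄] + d ≥ 0, and m[ā,a] + d + m[b,b̄] + d ≥ 0. -/

import Mathlib

namespace Octagon

/-- A DBM of dimension `2*n` with entries in `ℚ ∪ {+∞}`. -/
abbrev DBM (n : ℕ) : Type := Fin (2 * n) → Fin (2 * n) → WithTop ℚ

/-- `bar i = i + 1` if `i` is even, `i - 1` if `i` is odd. -/
def bar {n : ℕ} (i : Fin (2 * n)) : Fin (2 * n) :=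
  if h : (i : ℕ) % 2 = 0 then ⟨(i : ℕ) + 1, by have := i.isLt; omega⟩
  else ⟨(i : ℕ) - 1, by have := i.isLt; omega⟩

/-- A DBM is closed iff its diagonal is zero and it satisfies the triangle inequality. -/
def Closed {n : ℕ} (m : DBM n) : Prop :=
  (∀ i, m i i = 0) ∧ ∀ i j k, m i j ≤ m i k + m k j

/-- A DBM is consistent iff its diagonal entries are nonnegative. -/
def Consistent {n : ℕ} (m : DBM n) : Prop :=
  ∀ i, 0 ≤ m i i

/-- A DBM is coherent iff `m[i,j] = m[bar j, bar i]` for all `i, j`. -/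
def Coherent {n : ℕ} (m : DBM n) : Prop :=
  ∀ i j, m i j = m (bar j) (bar i)

/-- Incremental closure of `m` with the new constraint `x'_a - x'_b ≤ d`. -/
def IncClose {n : ℕ} (m : DBM n) (a b : Fin (2 * n)) (d : ℚ) : DBM n :=
  fun i j =>
    min (m i j) <|
    min (m i a + (d : WithTop ℚ) + m b j) <|
    min (m i (bar b) + (d : WithTop ℚ) + m (bar a) j) <|
    min (m i (bar b) + (d : WithTop ℚ) + m (bar a) a + (d : WithTop ℚ) + m b j)
        (m i a + (d : WithTop ℚ) + m b (bar b) + (d : WithTop ℚ) + m (bar a) j)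

/-- Halving on `ℚ ∪ {+∞}`, mapping `+∞` to `+∞`. -/
def halve : WithTop ℚ → WithTop ℚ := WithTop.map (fun x => x / 2)

/-- Strengthening of a DBM. -/
def Strengthen {n : ℕ} (m : DBM n) : DBM n :=
  fun i j => min (m i j) (halve (m i (bar i) + m (bar j) j))

/-- Lemma 1: `IncClose m a b d` is consistent iff the three listed
inequalities hold. -/
theorem incClose_consistent_iff {n : ℕ} (m : DBM n) (hm : Closed m)
    (a b : Fin (2 * n)) (d : ℚ) (m' : DBM n) (hm' : m' = IncClose m a b d) :
    Consistent m' ↔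
      (0 ≤ m b a + (d : WithTop ℚ) ∧
       0 ≤ m (bar a) (bar b) + (d : WithTop ℚ) ∧
       0 ≤ m (bar a) a + (d : WithTop ℚ) + m b (bar b) + (d : WithTop ℚ)) := by
  obtain ⟨hdiag, htri⟩ := hm
  subst hm'
  constructor
  · intro h
    refine ⟨?_, ?_, ?_⟩
    · have := le_trans (h b) (min_le_of_right_le (min_le_left _ _))
      simpa [hdiag b] using this
    · have := le_trans (h (bar a)) (min_le_of_right_le (min_le_of_right_le (min_le_left _ _)))
      simpa [hdiag (bar a)] using this
    · have := le_trans (h (bar a)) (min_le_of_right_le (min_le_of_right_le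
        (min_le_of_right_le (min_le_right _ _))))
      simpa [hdiag (bar a)] using this
  · rintro ⟨h1, h2, h3⟩ i
    simp only [IncClose, le_min_iff]
    refine ⟨by simp [hdiag i], ?_, ?_, ?_, ?_⟩
    · calc (0 : WithTop ℚ) ≤ m b a + (d : WithTop ℚ) := h1
        _ ≤ (m b i + m i a) + (d : WithTop ℚ) := add_le_add_left (htri b a i) _
        _ = m i a + (d : WithTop ℚ) + m b i := by abel
    · calc (0 : WithTop ℚ) ≤ m (bar a) (bar b) + (d : WithTop ℚ) := h2
        _ ≤ (m (bar a) i + m i (bar b)) + (d : WithTop ℚ) :=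
            add_le_add_left (htri (bar a) (bar b) i) _
        _ = m i (bar b) + (d : WithTop ℚ) + m (bar a) i := by abel
    · calc (0 : WithTop ℚ) ≤ m (bar a) a + (d : WithTop ℚ) + m b (bar b) + (d : WithTop ℚ) := h3
        _ ≤ m (bar a) a + (d : WithTop ℚ) + (m b i + m i (bar b)) + (d : WithTop ℚ) := by
            gcongr; exact htri b (bar b) i
        _ = m i (bar b) + (d : WithTop ℚ) + m (bar a) a + (d : WithTop ℚ) + m b i := by abel
    · calc (0 : WithTop ℚ) ≤ m (bar a) a + (d : WithTop ℚ) + m b (bar b) + (d : WithTop ℚ) := h3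
        _ ≤ (m (bar a) i + m i a) + (d : WithTop ℚ) + m b (bar b) + (d : WithTop ℚ) := by
            gcongr; exact htri (bar a) a i
        _ = m i a + (d : WithTop ℚ) + m b (bar b) + (d : WithTop ℚ) + m (bar a) i := by abel

end Octagon
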